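/- Let (A, μ, α) be a multiplicative Hom-algebra over a field k of characteristic 0 that is up to (n−1)-st Hom-power associative for some n ≥ 5. Then A is up to n-th Hom-power associative. -/

import Mathlib

variable {k A : Type*} [Field k] [CharZero k] [AddCommGroup A] [Module k A]

/-- The `n`-th Hom-power: `x^1 = x`, `x^n = x^{n-1} · α^{n-2}(x)`. -/
def homPow (μ : A →ₗ[k] A →ₗ[k] A) (α : A →ₗ[k] A) (x : A) : ℕ → A
  | 0 => x
  | 1 => x
  | n + 2 => μ (homPow μ α x (n + 1)) ((α ^ n) x)

/-- `A` is `n`-th Hom-power associative. -/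
def IsNthHomPowerAssoc (μ : A →ₗ[k] A →ₗ[k] A) (α : A →ₗ[k] A) (n : ℕ) : Prop :=
  ∀ (x : A) (i : ℕ), 1 ≤ i → i ≤ n - 1 →
    homPow μ α x n =
      μ ((α ^ (n - i - 1)) (homPow μ α x i)) ((α ^ (i - 1)) (homPow μ α x (n - i)))

/-- `A` is Hom-power associative. -/
def IsHomPowerAssoc (μ : A →ₗ[k] A →ₗ[k] A) (α : A →ₗ[k] A) : Prop :=
  ∀ n : ℕ, 2 ≤ n → IsNthHomPowerAssoc μ α n

/-- `A` is up to `n`-th Hom-power associative. -/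
def IsUpToNthHomPowerAssoc (μ : A →ₗ[k] A →ₗ[k] A) (α : A →ₗ[k] A) (n : ℕ) : Prop :=
  ∀ m : ℕ, 2 ≤ m → m ≤ n → IsNthHomPowerAssoc μ α m

/-- The Hom-algebra `(A, μ, α)` is multiplicative. -/
def IsMultiplicative (μ : A →ₗ[k] A →ₗ[k] A) (α : A →ₗ[k] A) : Prop :=
  ∀ x y : A, α (μ x y) = μ (α x) (α y)


set_option linter.unusedSectionVars false

namespace Stmt15

variable (μ : A →ₗ[k] A →ₗ[k] A) (α : A →ₗ[k] A)

lemma homPow_ss (x : A) (j : ℕ) :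
    homPow μ α x (j + 2) = μ (homPow μ α x (j + 1)) ((α ^ j) x) := rfl

lemma pow_apply_add (p q : ℕ) (x : A) : (α ^ p) ((α ^ q) x) = (α ^ (p + q)) x := by
  rw [pow_add, Module.End.mul_apply]

lemma pow_mul_dist (hmul : IsMultiplicative μ α) (m : ℕ) (a b : A) :
    (α ^ m) (μ a b) = μ ((α ^ m) a) ((α ^ m) b) := by
  induction m with
  | zero => simp
  | succ p ih =>
      rw [pow_succ', Module.End.mul_apply, ih, hmul, ← Module.End.mul_apply α (α ^ p) a,
        ← Module.End.mul_apply α (α ^ p) b]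

lemma homPow_pow (hmul : IsMultiplicative μ α) (x : A) (t : ℕ) :
    ∀ j, homPow μ α ((α ^ t) x) j = (α ^ t) (homPow μ α x j)
  | 0 => rfl
  | 1 => rfl
  | (j + 2) => by
      rw [homPow_ss, homPow_ss, homPow_pow hmul x t (j + 1), pow_apply_add,
        add_comm j t, ← pow_apply_add, pow_mul_dist μ α hmul]

def hcoef (x y : A) : ℕ → ℕ → A
  | 0, 0 => x
  | 0, 1 => y
  | 0, _ + 2 => 0
  | 1, 0 => x
  | 1, 1 => y
  | 1, _ + 2 => 0
  | j + 2, 0 => μ (hcoef x y (j + 1) 0) ((α ^ j) x)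
  | j + 2, s + 1 =>
      μ (hcoef x y (j + 1) (s + 1)) ((α ^ j) x) + μ (hcoef x y (j + 1) s) ((α ^ j) y)

lemma hcoef_step (x y : A) (j s : ℕ) :
    hcoef μ α x y (j + 2) (s + 1) =
      μ (hcoef μ α x y (j + 1) (s + 1)) ((α ^ j) x) + μ (hcoef μ α x y (j + 1) s) ((α ^ j) y) := rfl

lemma hcoef_step0 (x y : A) (j : ℕ) :
    hcoef μ α x y (j + 2) 0 = μ (hcoef μ α x y (j + 1) 0) ((α ^ j) x) := rfl

lemma hcoef_vanish (x y : A) : ∀ j s, j + 2 ≤ s → hcoef μ α x y j s = 0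
  | 0, s + 2, _ => rfl
  | 1, s + 2, _ => rfl
  | j + 2, s + 1, h => by
      rw [hcoef_step, hcoef_vanish x y (j + 1) (s + 1) (by omega),
        hcoef_vanish x y (j + 1) s (by omega)]
      simp

lemma hcoef_zero (x y : A) : ∀ j, hcoef μ α x y j 0 = homPow μ α x j
  | 0 => rfl
  | 1 => rfl
  | j + 2 => by rw [hcoef_step0, hcoef_zero x y (j + 1)]; rfl

lemma hcoef_expand (x y : A) :
    ∀ (j : ℕ) (t : k), homPow μ α (x + t • y) j =
      ∑ s ∈ Finset.range (j + 2), t ^ s • hcoef μ α x y j s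
  | 0, t => by
      simp [homPow, hcoef, Finset.sum_range_succ]
  | 1, t => by
      simp [homPow, hcoef, Finset.sum_range_succ]
  | j + 2, t => by
      have IH := hcoef_expand x y (j + 1) t
      rw [homPow_ss, IH, map_add, map_smul]
      rw [map_sum, LinearMap.sum_apply]
      have e1 : ∀ s ∈ Finset.range (j + 3),
          μ (t ^ s • hcoef μ α x y (j + 1) s) ((α ^ j) x + t • (α ^ j) y) =
          t ^ s • μ (hcoef μ α x y (j + 1) s) ((α ^ j) x)
          + t ^ (s + 1) • μ (hcoef μ α x y (j + 1) s) ((α ^ j) y) := by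
        intro s _
        rw [map_smul, LinearMap.smul_apply, map_add, map_smul, smul_add, smul_smul,
          ← pow_succ]
      rw [Finset.sum_congr rfl e1, Finset.sum_add_distrib]
      rw [Finset.sum_range_succ' (fun s => t ^ s • hcoef μ α x y (j + 2) s) (j + 3)]
      have e2 : ∀ s ∈ Finset.range (j + 3),
          t ^ (s + 1) • hcoef μ α x y (j + 2) (s + 1) =
          t ^ (s + 1) • μ (hcoef μ α x y (j + 1) (s + 1)) ((α ^ j) x)
          + t ^ (s + 1) • μ (hcoef μ α x y (j + 1) s) ((α ^ j) y) := by
        intro s _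
        rw [hcoef_step, smul_add]
      rw [Finset.sum_congr rfl e2, Finset.sum_add_distrib]
      have e3 : (∑ s ∈ Finset.range (j + 3), t ^ s • μ (hcoef μ α x y (j + 1) s) ((α ^ j) x))
          = (∑ s ∈ Finset.range (j + 3), t ^ (s + 1) • μ (hcoef μ α x y (j + 1) (s + 1)) ((α ^ j) x))
            + t ^ 0 • μ (hcoef μ α x y (j + 1) 0) ((α ^ j) x) := by
        rw [← Finset.sum_range_succ' (fun s => t ^ s • μ (hcoef μ α x y (j + 1) s) ((α ^ j) x)) (j + 3)]
        rw [Finset.sum_range_succ (fun s => t ^ s • μ (hcoef μ α x y (j + 1) s) ((α ^ j) x)) (j + 3)]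
        rw [hcoef_vanish μ α x y (j + 1) (j + 3) (by omega)]
        simp
      rw [e3]
      rw [hcoef_step0]
      simp only [pow_zero, one_smul]
      abel

end Stmt15

namespace Stmt15

variable (μ : A →ₗ[k] A →ₗ[k] A) (α : A →ₗ[k] A)

lemma hcoef_one (hmul : IsMultiplicative μ α) {M : ℕ}
    (hpa : ∀ m : ℕ, 2 ≤ m → m ≤ M → IsNthHomPowerAssoc μ α m) (x : A) (s' : ℕ) :
    ∀ j, 1 ≤ j → j + s' + 1 ≤ M →
      hcoef μ α ((α ^ (s' + 1)) x) (homPow μ α x (s' + 2)) j 1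
        = j • homPow μ α x (j + s' + 1)
  | 0, h, _ => absurd h (by omega)
  | 1, _, _ => by
      simp only [hcoef, one_smul]
      congr 1
      omega
  | j + 2, hj, h => by
      have h' : j + 1 + s' + 1 ≤ M := by omega
      have IH := hcoef_one hmul hpa x s' (j + 1) (by omega) h'
      rw [hcoef_step, IH, hcoef_zero, homPow_pow μ α hmul, pow_apply_add,
        map_nsmul, LinearMap.smul_apply]
      have e1 : μ (homPow μ α x (j + 1 + s' + 1)) ((α ^ (j + (s' + 1))) x)
          = homPow μ α x (j + 2 + s' + 1) := by
        have a1 : j + 1 + s' + 1 = (j + s' + 1) + 1 := by omega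
        have a2 : j + (s' + 1) = j + s' + 1 := by omega
        have a3 : j + 2 + s' + 1 = (j + s' + 1) + 2 := by omega
        rw [a1, a2, a3, ← homPow_ss]
      rw [e1]
      have e2 : μ ((α ^ (s' + 1)) (homPow μ α x (j + 1))) ((α ^ j) (homPow μ α x (s' + 2)))
          = homPow μ α x (j + 2 + s' + 1) := by
        have hp := hpa (j + 2 + s' + 1) (by omega) (by omega) x (j + 1) (by omega) (by omega)
        have d1 : j + 2 + s' + 1 - (j + 1) - 1 = s' + 1 := by omega
        have d2 : j + 1 - 1 = j := by omega
        have d3 : j + 2 + s' + 1 - (j + 1) = s' + 2 := by omega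
        rw [d1, d2, d3] at hp
        exact hp.symm
      rw [e2, ← succ_nsmul]

lemma extract2 {ι₁ ι₂ : Type} [DecidableEq ι₁] [DecidableEq ι₂]
    (S₁ : Finset ι₁) (S₂ : Finset ι₂)
    (e₁ : ι₁ → ℕ) (e₂ : ι₂ → ℕ) (w₁ : ι₁ → A) (w₂ : ι₂ → A)
    (h : ∀ t : k, ∑ s ∈ S₁, t ^ e₁ s • w₁ s = ∑ s ∈ S₂, t ^ e₂ s • w₂ s) (r : ℕ) :
    ∑ s ∈ S₁.filter (fun s => e₁ s = r), w₁ s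
      = ∑ s ∈ S₂.filter (fun s => e₂ s = r), w₂ s := by
  rw [← sub_eq_zero, ← Module.forall_dual_apply_eq_zero_iff k]
  intro φ
  have hp : (∑ s ∈ S₁, Polynomial.monomial (e₁ s) (φ (w₁ s))) =
      (∑ s ∈ S₂, Polynomial.monomial (e₂ s) (φ (w₂ s))) := by
    apply Polynomial.funext
    intro t
    have ht := congrArg φ (h t)
    simp only [map_sum, map_smul, smul_eq_mul] at ht
    simp only [Polynomial.eval_finset_sum, Polynomial.eval_monomial]
    calc ∑ s ∈ S₁, φ (w₁ s) * t ^ e₁ s = ∑ s ∈ S₁, t ^ e₁ s * φ (w₁ s) := by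
          exact Finset.sum_congr rfl fun s _ => mul_comm _ _
      _ = ∑ s ∈ S₂, t ^ e₂ s * φ (w₂ s) := ht
      _ = ∑ s ∈ S₂, φ (w₂ s) * t ^ e₂ s := Finset.sum_congr rfl fun s _ => mul_comm _ _
  have hc := congrArg (fun p => Polynomial.coeff p r) hp
  simp only [Polynomial.finset_sum_coeff, Polynomial.coeff_monomial] at hc
  rw [map_sub, sub_eq_zero, map_sum, map_sum]
  calc ∑ s ∈ S₁.filter (fun s => e₁ s = r), φ (w₁ s)
      = ∑ s ∈ S₁, if e₁ s = r then φ (w₁ s) else 0 := Finset.sum_filter _ _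
    _ = ∑ s ∈ S₂, if e₂ s = r then φ (w₂ s) else 0 := hc
    _ = ∑ s ∈ S₂.filter (fun s => e₂ s = r), φ (w₂ s) := (Finset.sum_filter _ _).symm

lemma relation (hmul : IsMultiplicative μ α) {M : ℕ}
    (hpa : ∀ m : ℕ, 2 ≤ m → m ≤ M → IsNthHomPowerAssoc μ α m)
    (x : A) (s' a b : ℕ) (hM : a + b + s' + 2 ≤ M) :
    hcoef μ α ((α ^ (s' + 1)) x) (homPow μ α x (s' + 2)) (a + b + 2) 1 =
      (a + 1) • μ ((α ^ b) (homPow μ α x (a + s' + 2))) ((α ^ (a + s' + 1)) (homPow μ α x (b + 1)))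
      + (b + 1) • μ ((α ^ (b + s' + 1)) (homPow μ α x (a + 1))) ((α ^ a) (homPow μ α x (b + s' + 2))) := by
  set x' : A := (α ^ (s' + 1)) x with hx'
  set y : A := homPow μ α x (s' + 2) with hy
  have key : ∀ t : k,
      ∑ s ∈ Finset.range (a + b + 4), t ^ s • hcoef μ α x' y (a + b + 2) s
      = ∑ p ∈ (Finset.range (a + 3)) ×ˢ (Finset.range (b + 3)),
          t ^ (p.1 + p.2) •
            μ ((α ^ b) (hcoef μ α x' y (a + 1) p.1)) ((α ^ a) (hcoef μ α x' y (b + 1) p.2)) := by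
    intro t
    have h0 := hpa (a + b + 2) (by omega) (by omega) (x' + t • y) (a + 1) (by omega) (by omega)
    have d1 : a + b + 2 - (a + 1) - 1 = b := by omega
    have d2 : a + 1 - 1 = a := by omega
    have d3 : a + b + 2 - (a + 1) = b + 1 := by omega
    rw [d1, d2, d3] at h0
    rw [hcoef_expand μ α x' y (a + b + 2) t, hcoef_expand μ α x' y (a + 1) t,
      hcoef_expand μ α x' y (b + 1) t] at h0
    simp only [map_sum, map_smul, LinearMap.sum_apply, LinearMap.smul_apply] at h0
    have hprod := Finset.sum_product' (s := Finset.range (a + 3)) (t := Finset.range (b + 3))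
      (f := fun u v => t ^ (u + v) •
        μ ((α ^ b) (hcoef μ α x' y (a + 1) u)) ((α ^ a) (hcoef μ α x' y (b + 1) v)))
    rw [hprod, Finset.sum_comm, h0]
    apply Finset.sum_congr rfl
    intro v _
    rw [Finset.smul_sum]
    apply Finset.sum_congr rfl
    intro u _
    rw [smul_smul, ← pow_add, Nat.add_comm v u]
  have ext := extract2 (Finset.range (a + b + 4))
      ((Finset.range (a + 3)) ×ˢ (Finset.range (b + 3)))
      (fun s => s) (fun p => p.1 + p.2) _ _ key 1
  have f1 : (Finset.range (a + b + 4)).filter (fun s => s = 1) = {1} := by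
    ext s
    simp only [Finset.mem_filter, Finset.mem_range, Finset.mem_singleton]
    omega
  have f2 : ((Finset.range (a + 3)) ×ˢ (Finset.range (b + 3))).filter
      (fun p => p.1 + p.2 = 1) = {((0 : ℕ), (1 : ℕ)), ((1 : ℕ), (0 : ℕ))} := by
    ext p
    simp [Finset.mem_filter, Finset.mem_product, Prod.ext_iff]
    omega
  rw [f1, f2, Finset.sum_singleton, Finset.sum_pair (by decide)] at ext
  rw [ext]
  have c10 : hcoef μ α x' y (a + 1) 0 = (α ^ (s' + 1)) (homPow μ α x (a + 1)) := by
    rw [hcoef_zero, hx', homPow_pow μ α hmul]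
  have c20 : hcoef μ α x' y (b + 1) 0 = (α ^ (s' + 1)) (homPow μ α x (b + 1)) := by
    rw [hcoef_zero, hx', homPow_pow μ α hmul]
  have c11 : hcoef μ α x' y (a + 1) 1 = (a + 1) • homPow μ α x (a + s' + 2) := by
    have h := hcoef_one μ α hmul hpa x s' (a + 1) (by omega) (by omega)
    rw [← hx', ← hy, show a + 1 + s' + 1 = a + s' + 2 from by omega] at h
    exact h
  have c21 : hcoef μ α x' y (b + 1) 1 = (b + 1) • homPow μ α x (b + s' + 2) := by
    have h := hcoef_one μ α hmul hpa x s' (b + 1) (by omega) (by omega)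
    rw [← hx', ← hy, show b + 1 + s' + 1 = b + s' + 2 from by omega] at h
    exact h
  simp only [c10, c20, c11, c21, map_nsmul, LinearMap.smul_apply]
  rw [pow_apply_add α b (s' + 1), pow_apply_add α a (s' + 1),
    show b + (s' + 1) = b + s' + 1 from by omega,
    show a + (s' + 1) = a + s' + 1 from by omega]
  abel

lemma smul_cancel {c : k} (hc : c ≠ 0) {u v : A} (h : c • u = c • v) : u = v := by
  have h2 := congrArg (fun w => c⁻¹ • w) h
  simpa [smul_smul, inv_mul_cancel₀ hc] using h2

end Stmt15

open Stmt15 in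
theorem Stmt15.main (μ : A →ₗ[k] A →ₗ[k] A) (α : A →ₗ[k] A) (n : ℕ) (hn : 5 ≤ n)
    (hmul : IsMultiplicative μ α)
    (hpa : ∀ m : ℕ, 2 ≤ m → m ≤ n - 1 → IsNthHomPowerAssoc μ α m) :
    ∀ m : ℕ, 2 ≤ m → m ≤ n → IsNthHomPowerAssoc μ α m := by
  intro m hm2 hmn
  rcases Nat.lt_or_ge m n with hlt | hge
  · exact hpa m hm2 (by omega)
  · have hm : m = n := by omega
    subst hm
    intro x i hi1 hin
    obtain ⟨N, rfl⟩ : ∃ N, m = N + 5 := ⟨m - 5, by omega⟩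
    have hpa' : ∀ m' : ℕ, 2 ≤ m' → m' ≤ N + 4 → IsNthHomPowerAssoc μ α m' :=
      fun m' h1 h3 => hpa m' h1 (by omega)
    set W : ℕ → A := fun j => μ ((α ^ (N + 5 - j - 1)) (homPow μ α x j))
      ((α ^ (j - 1)) (homPow μ α x (N + 5 - j))) with hW
    show homPow μ α x (N + 5) = W i
    set X : A := homPow μ α x (N + 5) with hX'
    set Δ₂ : A := hcoef μ α ((α ^ 1) x) (homPow μ α x 2) (N + 4) 1 with hD2
    set Δ₃ : A := hcoef μ α ((α ^ 2) x) (homPow μ α x 3) (N + 3) 1 with hD3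
    -- the two families of relations
    have h2 : ∀ a b : ℕ, a + b = N + 2 →
        Δ₂ = ((a : k) + 1) • W (a + 2) + ((b : k) + 1) • W (a + 1) := by
      intro a b hab
      have hr := relation μ α hmul hpa' x 0 a b (by omega)
      simp only [Nat.add_zero, Nat.zero_add] at hr
      rw [show a + b + 2 = N + 4 from by omega] at hr
      have w1 : W (a + 2) = μ ((α ^ b) (homPow μ α x (a + 2)))
          ((α ^ (a + 1)) (homPow μ α x (b + 1))) := by
        rw [hW]
        simp only
        rw [show N + 5 - (a + 2) - 1 = b from by omega,
          show a + 2 - 1 = a + 1 from by omega,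
          show N + 5 - (a + 2) = b + 1 from by omega]
      have w2 : W (a + 1) = μ ((α ^ (b + 1)) (homPow μ α x (a + 1)))
          ((α ^ a) (homPow μ α x (b + 2))) := by
        rw [hW]
        simp only
        rw [show N + 5 - (a + 1) - 1 = b + 1 from by omega,
          show a + 1 - 1 = a from by omega,
          show N + 5 - (a + 1) = b + 2 from by omega]
      rw [hD2, hr, w1, w2]
      norm_cast
    have h3 : ∀ a b : ℕ, a + b = N + 1 →
        Δ₃ = ((a : k) + 1) • W (a + 3) + ((b : k) + 1) • W (a + 1) := by
      intro a b hab
      have hr := relation μ α hmul hpa' x 1 a b (by omega)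
      rw [show a + b + 2 = N + 3 from by omega] at hr
      have w1 : W (a + 3) = μ ((α ^ b) (homPow μ α x (a + 1 + 2)))
          ((α ^ (a + 1 + 1)) (homPow μ α x (b + 1))) := by
        rw [hW]
        simp only
        rw [show N + 5 - (a + 3) - 1 = b from by omega,
          show a + 3 - 1 = a + 1 + 1 from by omega,
          show N + 5 - (a + 3) = b + 1 from by omega,
          show a + 3 = a + 1 + 2 from by omega]
      have w2 : W (a + 1) = μ ((α ^ (b + 1 + 1)) (homPow μ α x (a + 1)))
          ((α ^ a) (homPow μ α x (b + 1 + 2))) := by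
        rw [hW]
        simp only
        rw [show N + 5 - (a + 1) - 1 = b + 1 + 1 from by omega,
          show a + 1 - 1 = a from by omega,
          show N + 5 - (a + 1) = b + 1 + 2 from by omega]
      rw [hD3, hr, w1, w2]
      norm_cast
    have hX : W (N + 4) = X := by
      rw [hW]
      simp only
      rw [show N + 5 - (N + 4) - 1 = 0 from by omega,
        show N + 4 - 1 = N + 3 from by omega,
        show N + 5 - (N + 4) = 1 from by omega]
      rw [hX', show N + 5 = (N + 3) + 2 from by omega, homPow_ss]
      simp [homPow]
    have hA1 : Δ₂ = ((N : k) + 3) • X + W (N + 3) := by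
      have h := h2 (N + 2) 0 (by omega)
      rw [show N + 2 + 2 = N + 4 from by omega, show N + 2 + 1 = N + 3 from by omega, hX] at h
      rw [h]; push_cast; module
    have hA2 : Δ₂ = ((N : k) + 2) • W (N + 3) + (2 : k) • W (N + 2) := by
      have h := h2 (N + 1) 1 (by omega)
      rw [show N + 1 + 2 = N + 3 from by omega, show N + 1 + 1 = N + 2 from by omega] at h
      rw [h]; push_cast; module
    have hA3 : Δ₃ = ((N : k) + 2) • X + W (N + 2) := by
      have h := h3 (N + 1) 0 (by omega)
      rw [show N + 1 + 3 = N + 4 from by omega, show N + 1 + 1 = N + 2 from by omega, hX] at h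
      rw [h]; push_cast; module
    have hA4 : Δ₂ = ((N : k) + 1) • W (N + 2) + (3 : k) • W (N + 1) := by
      have h := h2 N 2 (by omega)
      rw [h]; push_cast; module
    have hA5 : Δ₃ = ((N : k) + 1) • W (N + 3) + (2 : k) • W (N + 1) := by
      have h := h3 N 1 (by omega)
      rw [h]; push_cast; module
    have hc : (2 * (N : k) ^ 2 + 13 * (N : k) + 15) ≠ 0 := by
      have h0 : ((2 * N ^ 2 + 13 * N + 15 : ℕ) : k) ≠ 0 :=
        Nat.cast_ne_zero.mpr (by positivity)
      push_cast at h0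
      exact h0
    have hDelta2 : Δ₂ = ((N : k) + 4) • X := by
      apply smul_cancel hc
      linear_combination (norm := module)
        (2 * (N : k) ^ 2 + 15 * (N : k) + 16) • hA1 - (2 * (N : k) + 5) • hA2
          + (6 : k) • hA3 + (4 : k) • hA4 - (6 : k) • hA5
    have key : ∀ d j, 1 ≤ j → j + d = N + 4 → W j = X := by
      intro d
      induction d with
      | zero =>
        intro j hj1 hj
        have hj' : j = N + 4 := by omega
        rw [hj', hX]
      | succ d ih =>
        intro j hj1 hj
        obtain ⟨a, rfl⟩ : ∃ a, j = a + 1 := ⟨j - 1, by omega⟩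
        have hE := h2 a d (by omega)
        have hih := ih (a + 2) (by omega) (by omega)
        rw [hih] at hE
        have hcastX : ((a : k) + (d : k)) • X = ((N : k) + 2) • X := by
          have : ((a : k) + (d : k)) = ((N : k) + 2) := by
            exact_mod_cast congrArg (Nat.cast : ℕ → k) (show a + d = N + 2 by omega)
          rw [this]
        have hd1 : ((d : k) + 1) ≠ 0 := by
          have h0 : ((d + 1 : ℕ) : k) ≠ 0 := Nat.cast_ne_zero.mpr (by omega)
          push_cast at h0
          exact h0
        apply smul_cancel hd1
        linear_combination (norm := module) hDelta2 - hE - hcastX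
    exact (key (N + 4 - i) i hi1 (by omega)).symm


/-- Theorem (main lemma): a multiplicative up to `(n−1)`-st Hom-power associative
algebra with `n ≥ 5` is up to `n`-th Hom-power associative. -/
theorem stmt15 (μ : A →ₗ[k] A →ₗ[k] A) (α : A →ₗ[k] A) (n : ℕ) (hn : 5 ≤ n)
    (hmul : IsMultiplicative μ α)
    (hpa : IsUpToNthHomPowerAssoc μ α (n - 1)) :
    IsUpToNthHomPowerAssoc μ α n := by
  exact Stmt15.main μ α n hn hmul hpa
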